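/- A combinatorial choice function is path independent if and only if it has a maximizer-collecting rationalization, i.e., there is a finite sequence of linear orders on E such that the choice from every nonempty S equals the set of maximizers of S under these orders. -/

import Mathlib

section AMaux

set_option linter.unusedSectionVars false

variable {E : Type*} [DecidableEq E] [Fintype E]

/-- A list is greedy for `C` if each element is chosen by `C` from the set of
remaining elements. -/
def AMGreedy (C : Finset E → Finset E) : List E → Prop
  | [] => True
  | x :: xs => x ∈ C (x :: xs).toFinset ∧ AMGreedy C xs

lemma AM_perm_of_toFinset_eq {l m : List E} (hl : l.Nodup) (hm : m.Nodup)
    (h : l.toFinset = m.toFinset) : l.Perm m := by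
  have : (l : Multiset E) = (m : Multiset E) := by
    have := congrArg Finset.val h
    rwa [List.toFinset_val, List.toFinset_val, List.dedup_eq_self.mpr hl,
      List.dedup_eq_self.mpr hm] at this
  exact Quotient.exact this

/-- The first element of `S` along a greedy list belongs to `C S`. -/
lemma AM_claimA (C : Finset E → Finset E) (hC : ∀ S, C S ⊆ S)
    (chern : ∀ {x : E} {S T : Finset E}, x ∈ C T → x ∈ S → S ⊆ T → x ∈ C S) :
    ∀ (l : List E), AMGreedy C l → ∀ S : Finset E, S.Nonempty → S ⊆ l.toFinset →
      ∃ a ∈ C S, ∀ b ∈ S, l.idxOf a ≤ l.idxOf b := by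
  intro l
  induction l with
  | nil =>
    intro _ S hS hsub
    obtain ⟨y, hy⟩ := hS
    simpa using hsub hy
  | cons x xs ih =>
    intro hg S hS hsub
    obtain ⟨hx, hg'⟩ := hg
    by_cases hxS : x ∈ S
    · exact ⟨x, chern hx hxS hsub, fun b hb => by simp⟩
    · have hsub' : S ⊆ xs.toFinset := by
        intro b hb
        have := hsub hb
        simp only [List.toFinset_cons, Finset.mem_insert, List.mem_toFinset] at this
        rcases this with h | h
        · exact absurd (h ▸ hb) hxS
        · exact List.mem_toFinset.mpr h
      obtain ⟨a, haC, hmin⟩ := ih hg' S hS hsub'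
      have hxa : x ≠ a := fun h => hxS (h ▸ hC S haC)
      refine ⟨a, haC, fun b hb => ?_⟩
      have hxb : x ≠ b := fun h => hxS (h ▸ hb)
      rw [List.idxOf_cons_ne _ hxa, List.idxOf_cons_ne _ hxb]
      exact Nat.succ_le_succ (hmin b hb)

/-- Every finite set admits a greedy enumeration. -/
lemma AM_enum (C : Finset E → Finset E) (hC : ∀ S, C S ⊆ S)
    (hne : ∀ S : Finset E, S.Nonempty → (C S).Nonempty) :
    ∀ T : Finset E, ∃ l : List E, AMGreedy C l ∧ l.Nodup ∧ l.toFinset = T := by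
  intro T
  induction T using Finset.strongInduction with
  | _ T ih =>
    rcases T.eq_empty_or_nonempty with rfl | hT
    · exact ⟨[], trivial, List.nodup_nil, by simp⟩
    · obtain ⟨x, hx⟩ := hne T hT
      have hxT : x ∈ T := hC T hx
      obtain ⟨l', hg', hnd', hfin'⟩ := ih (T.erase x) (Finset.erase_ssubset hxT)
      have hxl' : x ∉ l' := by
        intro h
        have : x ∈ T.erase x := hfin' ▸ List.mem_toFinset.mpr h
        exact (Finset.notMem_erase x T) this
      have hfin : (x :: l').toFinset = T := by
        simp [List.toFinset_cons, hfin', Finset.insert_erase hxT]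
      exact ⟨x :: l', ⟨hfin ▸ hx, hg'⟩, List.nodup_cons.mpr ⟨hxl', hnd'⟩, hfin⟩

/-- Any chosen element of `S` is the first element of `S` along some greedy
enumeration of any superset `T`. -/
lemma AM_extend (C : Finset E → Finset E) (hC : ∀ S, C S ⊆ S)
    (hne : ∀ S : Finset E, S.Nonempty → (C S).Nonempty)
    (key : ∀ {a : E} {S T : Finset E}, a ∈ C S → S ⊆ T → C T ⊆ S → a ∈ C T) :
    ∀ T : Finset E, ∀ {a : E} {S : Finset E}, a ∈ C S → S ⊆ T →
      ∃ l : List E, AMGreedy C l ∧ l.Nodup ∧ l.toFinset = T ∧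
        ∀ b ∈ S, l.idxOf a ≤ l.idxOf b := by
  intro T
  induction T using Finset.strongInduction with
  | _ T ih =>
    intro a S haS hST
    have haT : a ∈ T := hST (hC S haS)
    by_cases haCT : a ∈ C T
    · obtain ⟨l', hg', hnd', hfin'⟩ := AM_enum C hC hne (T.erase a)
      have hal' : a ∉ l' := by
        intro h
        have : a ∈ T.erase a := hfin' ▸ List.mem_toFinset.mpr h
        exact (Finset.notMem_erase a T) this
      have hfin : (a :: l').toFinset = T := by
        simp [List.toFinset_cons, hfin', Finset.insert_erase haT]
      refine ⟨a :: l', ⟨hfin ▸ haCT, hg'⟩, List.nodup_cons.mpr ⟨hal', hnd'⟩, hfin,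
        fun b hb => by simp⟩
    · have : ¬ C T ⊆ S := fun h => haCT (key haS hST h)
      obtain ⟨x, hxCT, hxS⟩ := Finset.not_subset.mp this
      have hxT : x ∈ T := hC T hxCT
      have hST' : S ⊆ T.erase x := fun b hb =>
        Finset.mem_erase.mpr ⟨fun h => hxS (h ▸ hb), hST hb⟩
      obtain ⟨l', hg', hnd', hfin', hidx'⟩ := ih (T.erase x) (Finset.erase_ssubset hxT) haS hST'
      have hxl' : x ∉ l' := by
        intro h
        have : x ∈ T.erase x := hfin' ▸ List.mem_toFinset.mpr h
        exact (Finset.notMem_erase x T) this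
      have hfin : (x :: l').toFinset = T := by
        simp [List.toFinset_cons, hfin', Finset.insert_erase hxT]
      refine ⟨x :: l', ⟨hfin ▸ hxCT, hg'⟩, List.nodup_cons.mpr ⟨hxl', hnd'⟩, hfin,
        fun b hb => ?_⟩
      have hxa : x ≠ a := fun h => hxS (h ▸ hC S haS)
      have hxb : x ≠ b := fun h => hxS (h ▸ hb)
      rw [List.idxOf_cons_ne _ hxa, List.idxOf_cons_ne _ hxb]
      exact Nat.succ_le_succ (hidx' b hb)

/-- A total transitive relation has a maximum on every finite nonempty set. -/
lemma AM_max {E : Type*} (r : E → E → Prop) [DecidableEq E]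
    (htot : ∀ a b, r a b ∨ r b a) (htr : ∀ {a b c}, r a b → r b c → r a c) :
    ∀ S : Finset E, S.Nonempty → ∃ m ∈ S, ∀ b ∈ S, r m b := by
  intro S
  induction S using Finset.induction with
  | empty => intro h; exact absurd h (by simp)
  | @insert x S hx ih =>
    intro _
    rcases S.eq_empty_or_nonempty with rfl | hS
    · refine ⟨x, by simp, fun b hb => ?_⟩
      simp only [Finset.mem_insert, Finset.notMem_empty, or_false] at hb
      rw [hb]
      rcases htot x x with h | h <;> exact h
    · obtain ⟨m, hmS, hm⟩ := ih hS
      rcases htot x m with h | h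
      · refine ⟨x, Finset.mem_insert_self x S, fun b hb => ?_⟩
        rcases Finset.mem_insert.mp hb with rfl | hb
        · rcases htot b b with h' | h' <;> exact h'
        · exact htr h (hm b hb)
      · refine ⟨m, Finset.mem_insert_of_mem hmS, fun b hb => ?_⟩
        rcases Finset.mem_insert.mp hb with rfl | hb
        · exact h
        · exact hm b hb

end AMaux

/-- A combinatorial choice function is path independent iff it has a
maximizer-collecting rationalization. -/
theorem pathIndependent_iff_maximizerCollecting
    {E : Type*} [DecidableEq E] [Fintype E] (C : Finset E → Finset E)
    (hC : ∀ S, C S ⊆ S)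
    (hne : ∀ S : Finset E, S.Nonempty → (C S).Nonempty) :
    (∀ S T, C (S ∪ T) = C (C S ∪ C T)) ↔
      ∃ L : List (E → E → Prop),
        (∀ r ∈ L, IsLinearOrder E r) ∧
        (∀ S : Finset E, S.Nonempty →
          ∀ a : E, a ∈ C S ↔ ∃ r ∈ L, a ∈ S ∧ ∀ b ∈ S, r a b) := by
  classical
  constructor
  · -- Path independence implies rationalization
    intro hPI
    -- Chernoff property
    have chern : ∀ {x : E} {S T : Finset E}, x ∈ C T → x ∈ S → S ⊆ T → x ∈ C S := by
      intro x S T hx hxS hsub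
      have h := hPI S (T \ S)
      rw [Finset.union_sdiff_of_subset hsub] at h
      have hx' : x ∈ C S ∪ C (T \ S) := hC _ (h ▸ hx)
      rcases Finset.mem_union.mp hx' with h' | h'
      · exact h'
      · exact absurd (hC _ h') (by simp [hxS])
    -- Key expansion property
    have key : ∀ {a : E} {S T : Finset E}, a ∈ C S → S ⊆ T → C T ⊆ S → a ∈ C T := by
      intro a S T haS hST hTS
      have h := hPI S T
      rw [Finset.union_eq_right.mpr hST] at h
      have hUS : C S ∪ C T ⊆ S := Finset.union_subset (hC S) hTS
      have : a ∈ C (C S ∪ C T) :=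
        chern haS (Finset.mem_union_left _ haS) hUS
      exact h ▸ this
    refine ⟨((Finset.univ (α := E)).toList.permutations.filter
        fun l => decide (AMGreedy C l)).map
        fun l => fun a b => l.idxOf a ≤ l.idxOf b, ?_, ?_⟩
    · -- each relation is a linear order
      intro r hr
      obtain ⟨l, hl, rfl⟩ := List.mem_map.mp hr
      have hl' := List.mem_filter.mp hl
      have hperm : l.Perm (Finset.univ (α := E)).toList :=
        List.mem_permutations.mp hl'.1
      have hmem : ∀ a : E, a ∈ l := by
        intro a
        exact hperm.mem_iff.mpr (Finset.mem_toList.mpr (Finset.mem_univ a))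
      exact { refl := fun a => le_refl _
              trans := fun a b c => le_trans
              antisymm := fun a b h1 h2 =>
                (List.idxOf_inj (hmem a)).mp (le_antisymm h1 h2)
              total := fun a b => le_total _ _ }
    · intro S hS a
      constructor
      · intro haS
        obtain ⟨l, hg, hnd, hfin, hidx⟩ :=
          AM_extend C hC hne key Finset.univ haS (Finset.subset_univ S)
        refine ⟨fun a b => l.idxOf a ≤ l.idxOf b, ?_, hC S haS, hidx⟩
        refine List.mem_map.mpr ⟨l, List.mem_filter.mpr ⟨?_, decide_eq_true hg⟩, rfl⟩
        refine List.mem_permutations.mpr (AM_perm_of_toFinset_eq hnd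
          (Finset.nodup_toList _) ?_)
        rw [hfin, Finset.toList_toFinset]
      · rintro ⟨r, hr, haSmem, hmax⟩
        obtain ⟨l, hl, rfl⟩ := List.mem_map.mp hr
        have hl' := List.mem_filter.mp hl
        have hg : AMGreedy C l := of_decide_eq_true hl'.2
        have hperm : l.Perm (Finset.univ (α := E)).toList :=
          List.mem_permutations.mp hl'.1
        have hfin : l.toFinset = Finset.univ := by
          have : l.toFinset = (Finset.univ (α := E)).toList.toFinset :=
            Finset.ext fun x => by simp [List.mem_toFinset, hperm.mem_iff]
          rw [this, Finset.toList_toFinset]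
        have hmem : ∀ x : E, x ∈ l := fun x =>
          List.mem_toFinset.mp (hfin ▸ Finset.mem_univ x)
        obtain ⟨a', ha'C, ha'min⟩ :=
          AM_claimA C hC chern l hg S hS (hfin ▸ Finset.subset_univ S)
        have h1 : l.idxOf a ≤ l.idxOf a' := hmax a' (hC S ha'C)
        have h2 : l.idxOf a' ≤ l.idxOf a := ha'min a haSmem
        have : a = a' := (List.idxOf_inj (hmem a)).mp (le_antisymm h1 h2)
        exact this ▸ ha'C
  · -- Rationalization implies path independence
    rintro ⟨L, hlin, hrat⟩ S T
    rcases (S ∪ T).eq_empty_or_nonempty with hST | hST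
    · have hSe : S = ∅ := by
        rw [Finset.union_eq_empty] at hST; exact hST.1
      have hTe : T = ∅ := by
        rw [Finset.union_eq_empty] at hST; exact hST.2
      have hCe : C ∅ = ∅ := Finset.subset_empty.mp (hC ∅)
      simp [hSe, hTe, hCe]
    · have hCCne : (C S ∪ C T).Nonempty := by
        obtain ⟨y, hy⟩ := hST
        rcases Finset.mem_union.mp hy with h | h
        · obtain ⟨z, hz⟩ := hne S ⟨y, h⟩
          exact ⟨z, Finset.mem_union_left _ hz⟩
        · obtain ⟨z, hz⟩ := hne T ⟨y, h⟩
          exact ⟨z, Finset.mem_union_right _ hz⟩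
      have hsub : C S ∪ C T ⊆ S ∪ T :=
        Finset.union_subset_union (hC S) (hC T)
      ext a
      rw [hrat _ hST a, hrat _ hCCne a]
      constructor
      · rintro ⟨r, hrL, haST, hmax⟩
        have hlr := hlin r hrL
        have haCC : a ∈ C S ∪ C T := by
          rcases Finset.mem_union.mp haST with h | h
          · exact Finset.mem_union_left _ ((hrat S ⟨a, h⟩ a).mpr
              ⟨r, hrL, h, fun b hb => hmax b (Finset.mem_union_left _ hb)⟩)
          · exact Finset.mem_union_right _ ((hrat T ⟨a, h⟩ a).mpr
              ⟨r, hrL, h, fun b hb => hmax b (Finset.mem_union_right _ hb)⟩)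
        exact ⟨r, hrL, haCC, fun b hb => hmax b (hsub hb)⟩
      · rintro ⟨r, hrL, haCC, hmax⟩
        have hlr := hlin r hrL
        have htot : ∀ x y : E, r x y ∨ r y x := hlr.toTotal.total
        have htr : ∀ {x y z : E}, r x y → r y z → r x z := fun h1 h2 =>
          hlr.toIsPartialOrder.toIsPreorder.toIsTrans.trans _ _ _ h1 h2
        refine ⟨r, hrL, hsub haCC, fun b hb => ?_⟩
        rcases Finset.mem_union.mp hb with hbS | hbT
        · obtain ⟨m, hmS, hm⟩ := AM_max r htot htr S ⟨b, hbS⟩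
          have hmC : m ∈ C S := (hrat S ⟨b, hbS⟩ m).mpr ⟨r, hrL, hmS, hm⟩
          exact htr (hmax m (Finset.mem_union_left _ hmC)) (hm b hbS)
        · obtain ⟨m, hmS, hm⟩ := AM_max r htot htr T ⟨b, hbT⟩
          have hmC : m ∈ C T := (hrat T ⟨b, hbT⟩ m).mpr ⟨r, hrL, hmS, hm⟩
          exact htr (hmax m (Finset.mem_union_right _ hmC)) (hm b hbT)
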